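/- Let Z be a compact metric space with at least four points and let ρ₁, ρ₂ be two antipodal diameter-one metrics on Z that are Moebius equivalent (i.e. all metric cross-ratios [ξξ'ηη']_ρ = ρ(ξ,η)ρ(ξ',η')/(ρ(ξ,η')ρ(ξ',η)) agree). Suppose there is a continuous positive function dρ₂/dρ₁ on Z satisfying ρ₂(ξ,η)² = (dρ₂/dρ₁)(ξ)·(dρ₂/dρ₁)(η)·ρ₁(ξ,η)² for all ξ,η. Then (max over Z of dρ₂/dρ₁)·(min over Z of dρ₂/dρ₁) = 1. -/
import Mathlib


open Set Filter Topology

/-- An antipodal metric of diameter one on a topological space `Z`,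
given as a two-variable function. -/
structure IsAntipodalMetric {Z : Type*} [TopologicalSpace Z] (ρ : Z → Z → ℝ) : Prop where
  symm : ∀ ξ η, ρ ξ η = ρ η ξ
  eq_zero_iff : ∀ ξ η, ρ ξ η = 0 ↔ ξ = η
  nonneg : ∀ ξ η, 0 ≤ ρ ξ η
  triangle : ∀ ξ η ζ, ρ ξ ζ ≤ ρ ξ η + ρ η ζ
  continuous : Continuous fun p : Z × Z => ρ p.1 p.2
  le_one : ∀ ξ η, ρ ξ η ≤ 1
  antipodal : ∀ ξ, ∃ η, ρ ξ η = 1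

/-- Two metrics are Moebius equivalent if all metric cross-ratios
`[ξξ'ηη']_ρ = ρ(ξ,η)ρ(ξ',η')/(ρ(ξ,η')ρ(ξ',η))` agree (stated multiplicatively). -/
def MoebiusEquiv {Z : Type*} (ρ σ : Z → Z → ℝ) : Prop :=
  ∀ ξ ξ' η η' : Z, ξ ≠ ξ' → ξ ≠ η → ξ ≠ η' → ξ' ≠ η → ξ' ≠ η' → η ≠ η' →
    ρ ξ η * ρ ξ' η' * (σ ξ η' * σ ξ' η) = σ ξ η * σ ξ' η' * (ρ ξ η' * ρ ξ' η)

/-- for Moebius-equivalent antipodal diameter-one metrics `ρ₁, ρ₂` on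
a compact space with at least four points, with continuous positive derivative `λ = dρ₂/dρ₁`
satisfying the Geometric Mean Value Theorem, one has `max λ · min λ = 1`. -/
theorem maxmin_derivative {Z : Type*} [MetricSpace Z] [CompactSpace Z]
    (hfour : ∃ a b c d : Z, a ≠ b ∧ a ≠ c ∧ a ≠ d ∧ b ≠ c ∧ b ≠ d ∧ c ≠ d)
    (ρ₁ ρ₂ : Z → Z → ℝ)
    (h₁ : IsAntipodalMetric ρ₁) (h₂ : IsAntipodalMetric ρ₂)
    (hmoeb : MoebiusEquiv ρ₁ ρ₂)
    (lam : Z → ℝ) (hlamcont : Continuous lam) (hlampos : ∀ ξ, 0 < lam ξ)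
    (hGMVT : ∀ ξ η, ρ₂ ξ η ^ 2 = lam ξ * lam η * ρ₁ ξ η ^ 2) :
    ∀ ξmax ξmin : Z, IsMaxOn lam Set.univ ξmax → IsMinOn lam Set.univ ξmin →
      lam ξmax * lam ξmin = 1 := by
  intro ξmax ξmin hmax hmin
  apply le_antisymm
  · obtain ⟨η, hη⟩ := h₁.antipodal ξmax
    have h := hGMVT ξmax η
    have h2le := h₂.le_one ξmax η
    have h2nn := h₂.nonneg ξmax η
    have hminη : lam ξmin ≤ lam η := hmin (Set.mem_univ η)
    have hpmax := hlampos ξmax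
    rw [hη] at h
    have h1 : lam ξmax * lam η ≤ 1 := by nlinarith
    calc lam ξmax * lam ξmin ≤ lam ξmax * lam η :=
          mul_le_mul_of_nonneg_left hminη hpmax.le
      _ ≤ 1 := h1
  · obtain ⟨η, hη⟩ := h₂.antipodal ξmin
    have h := hGMVT ξmin η
    have h1le := h₁.le_one ξmin η
    have h1nn := h₁.nonneg ξmin η
    have hmaxη : lam η ≤ lam ξmax := hmax (Set.mem_univ η)
    have hpmin := hlampos ξmin
    have hpη := hlampos η
    rw [hη] at h
    have hsq : ρ₁ ξmin η ^ 2 ≤ 1 := by nlinarith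
    calc (1 : ℝ) = lam ξmin * lam η * ρ₁ ξmin η ^ 2 := by linarith [h]
      _ ≤ lam ξmin * lam η * 1 :=
          mul_le_mul_of_nonneg_left hsq (by positivity)
      _ = lam ξmin * lam η := by ring
      _ ≤ lam ξmin * lam ξmax := mul_le_mul_of_nonneg_left hmaxη hpmin.le
      _ = lam ξmax * lam ξmin := by ring
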